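/- Let H = (V, E, w) be a finite weighted hypergraph with nonnegative hyperedge weights, let s be a source vertex, and let L = {e_1, e_2, …, e_l} be a shortest hyperpath from s ∈ e_1 to a vertex z ∈ e_l. Then for every index 1 ≤ i ≤ l−1 and any two vertices u, v ∈ e_i ∩ e_{i+1}, the shortest-hyperpath distances from s satisfy d[u] = d[v]. -/

import Mathlib

open scoped ENNReal NNReal

variable {V : Type*}

/-- A hyperpath from `u` to `v` in the hypergraph with hyperedge set `E`:
a nonempty list of hyperedges, the first containing `u`, the last containing `v`,
with consecutive hyperedges intersecting. -/
def IsHyperpath [DecidableEq V] (E : Finset (Finset V)) (u v : V)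
    (L : List (Finset V)) : Prop :=
  (∀ e ∈ L, e ∈ E) ∧ L.Chain' (fun a b => (a ∩ b).Nonempty) ∧
    ∃ h : L ≠ [], u ∈ L.head h ∧ v ∈ L.getLast h

/-- The weight of a hyperpath: the sum of the weights of its hyperedges. -/
def hweight (w : Finset V → ℝ≥0) (L : List (Finset V)) : ℝ≥0 :=
  (L.map w).sum

/-- Shortest-hyperpath distance from `s` to `v` (`∞` when no hyperpath exists). -/
noncomputable def hdist [DecidableEq V] (E : Finset (Finset V))
    (w : Finset V → ℝ≥0) (s v : V) : ℝ≥0∞ :=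
  ⨅ L : {L : List (Finset V) // IsHyperpath E s v L}, (hweight w L.1 : ℝ≥0∞)

theorem key [DecidableEq V]
    (E : Finset (Finset V))
    (w : Finset V → ℝ≥0) (s z : V) (L : List (Finset V))
    (hL : IsHyperpath E s z L)
    (hmin : ∀ L', IsHyperpath E s z L' → hweight w L ≤ hweight w L')
    (i : ℕ) (hi : i + 1 < L.length) (u v : V)
    (hu : u ∈ L[i]'(Nat.lt_of_succ_lt hi) ∩ L[i + 1]'hi)
    (hv : v ∈ L[i]'(Nat.lt_of_succ_lt hi) ∩ L[i + 1]'hi) :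
    hdist E w s v ≤ hdist E w s u := by
  obtain ⟨hLE, hchain, hne, hs, hz⟩ := hL
  set T := L.take (i+1) with hT
  set D := L.drop (i+1) with hD
  have hTlen : T.length = i + 1 := by simp [hT]; omega
  have hDlen : D.length = L.length - (i + 1) := by simp [hD]
  have hTne : T ≠ [] := List.ne_nil_of_length_pos (by omega)
  have hDne : D ≠ [] := List.ne_nil_of_length_pos (by omega)
  have hTlast : T.getLast hTne = L[i]'(by omega) := by
    rw [List.getLast_eq_getElem]
    simp [hTlen, hT]; congr 1; omega
  have hThead : T.head hTne = L.head hne := by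
    rw [List.head_eq_getElem, List.head_eq_getElem]
    simp [hT]
  have hDhead : D.head hDne = L[i+1]'hi := by
    rw [List.head_eq_getElem]
    simp [hD]
  have hpathv : IsHyperpath E s v T := by
    refine ⟨fun e he => hLE e (List.mem_of_mem_take he), hchain.prefix (L.take_prefix _), hTne, ?_, ?_⟩
    · rw [hThead]; exact hs
    · rw [hTlast]; exact Finset.mem_of_mem_inter_left hv
  refine le_iInf fun ⟨P, hP⟩ => ?_
  obtain ⟨hPE, hPchain, hPne, hPs, hPu⟩ := hP
  have hpathz : IsHyperpath E s z (P ++ D) := by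
    refine ⟨?_, ?_, ?_, ?_, ?_⟩
    · intro e he
      rcases List.mem_append.1 he with h | h
      · exact hPE e h
      · exact hLE e (List.mem_of_mem_drop h)
    · apply List.isChain_append.2
      refine ⟨hPchain, hchain.suffix (L.drop_suffix _), ?_⟩
      intro x hx y hy
      rw [List.getLast?_eq_getLast hPne] at hx
      rw [List.head?_eq_head hDne] at hy
      simp only [Option.mem_def, Option.some.injEq] at hx hy
      subst hx; subst hy
      rw [hDhead]
      exact ⟨u, Finset.mem_inter.2 ⟨hPu, Finset.mem_of_mem_inter_right hu⟩⟩
    · simp [hPne]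
    · rw [List.head_append_of_ne_nil hPne]; exact hPs
    · rw [List.getLast_append_of_ne_nil _ hDne]
      have : D.getLast hDne = L.getLast hne := by
        rw [List.getLast_eq_getElem, List.getLast_eq_getElem]
        simp [hD]; congr 1; omega
      rw [this]; exact hz
  have hw : hweight w T ≤ hweight w P := by
    have h1 := hmin _ hpathz
    have h2 : hweight w L = hweight w T + hweight w D := by
      rw [hweight, hweight, hweight, ← List.sum_append, ← List.map_append,
        List.take_append_drop]
    have h3 : hweight w (P ++ D) = hweight w P + hweight w D := by
      rw [hweight, hweight, hweight, List.map_append, List.sum_append]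
    rw [h2, h3] at h1
    exact le_of_add_le_add_right h1
  calc hdist E w s v ≤ (hweight w T : ℝ≥0∞) := iInf_le _ (⟨T, hpathv⟩ : {L : List (Finset V) // IsHyperpath E s v L})
    _ ≤ (hweight w P : ℝ≥0∞) := by exact_mod_cast hw


/-- In a finite weighted hypergraph with nonnegative hyperedge
weights, if `L = (e_1, …, e_l)` is a shortest hyperpath from the source `s` to
`z`, then for every `1 ≤ i ≤ l − 1` (here `0`-indexed: `i + 1 < L.length`) and
any two vertices `u, v ∈ e_i ∩ e_{i+1}`, the shortest-hyperpath distances from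
`s` satisfy `d[u] = d[v]`. -/
theorem shortest_hyperpath_intersection_eq_dist [Fintype V] [DecidableEq V]
    (E : Finset (Finset V)) (hE : ∀ e ∈ E, e.Nonempty)
    (hcover : ∀ x : V, ∃ e ∈ E, x ∈ e)
    (w : Finset V → ℝ≥0) (s z : V) (L : List (Finset V))
    (hL : IsHyperpath E s z L)
    (hmin : ∀ L', IsHyperpath E s z L' → hweight w L ≤ hweight w L')
    (i : ℕ) (hi : i + 1 < L.length) (u v : V)
    (hu : u ∈ L[i]'(by omega) ∩ L[i + 1]'hi)
    (hv : v ∈ L[i]'(by omega) ∩ L[i + 1]'hi) :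
    hdist E w s u = hdist E w s v :=
  le_antisymm (key E w s z L hL hmin i hi v u hv hu)
    (key E w s z L hL hmin i hi u v hu hv)
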